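/- Degree threshold at the social optimum: let y* minimize the social cost SC(y) = Σ_d [y_d·C_{d,P}(X(y)) + (m_d − y_d)·C_{d,N}(X(y))] over y ∈ Π_d [0, m_d], and let d† = min{d : y*_d > 0}. If d† < D_max, then y*_d = m_d for all d > d†. -/

import Mathlib

open Finset

/-- `𝒟 = {1, …, D_max}`. -/
def Dset (Dmax : ℕ) : Finset ℕ := Finset.Icc 1 Dmax

/-- Weighted degree distribution `w_d = d·m_d / ∑ d'·m_{d'}`. -/
noncomputable def wgt (Dmax : ℕ) (m : ℕ → ℝ) (d : ℕ) : ℝ :=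
  (d : ℝ) * m d / ∑ d' ∈ Dset Dmax, (d' : ℝ) * m d'

/-- `γ(y) = β_IA · ∑_d w_d (p_U − (y_d/m_d)·Δp)` where `Δp = p_U − p_P`. -/
noncomputable def gam (Dmax : ℕ) (m : ℕ → ℝ) (pP pU βIA : ℝ) (y : ℕ → ℝ) : ℝ :=
  βIA * ∑ d ∈ Dset Dmax, wgt Dmax m d * (pU - (y d / m d) * (pU - pP))

/-- `λ(y) = β_IA · ∑_d w_d (d−1) (p_U − (y_d/m_d)·Δp)`. -/
noncomputable def lamb (Dmax : ℕ) (m : ℕ → ℝ) (pP pU βIA : ℝ) (y : ℕ → ℝ) : ℝ :=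
  βIA * ∑ d ∈ Dset Dmax, wgt Dmax m d * ((d : ℝ) - 1) * (pU - (y d / m d) * (pU - pP))

/-- Risk exposure `e(y) = γ(y) · ∑_{k=1}^{K} λ(y)^{k−1}`. -/
noncomputable def expo (Dmax : ℕ) (m : ℕ → ℝ) (pP pU βIA : ℝ) (K : ℕ)
    (y : ℕ → ℝ) : ℝ :=
  gam Dmax m pP pU βIA y * ∑ k ∈ Finset.range K, lamb Dmax m pP pU βIA y ^ k

/-- Social cost
`SC(y) = ∑_d [ y_d·C_{d,P}(X(y)) + (m_d − y_d)·C_{d,N}(X(y)) ]` with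
`C_{d,P} = τ(1 + d·e(y))L_P + c_P` and `C_{d,N} = τ(1 + d·e(y))L_U`. -/
noncomputable def SC (Dmax : ℕ) (m : ℕ → ℝ) (pP pU βIA τ LP LU cP : ℝ) (K : ℕ)
    (y : ℕ → ℝ) : ℝ :=
  ∑ d ∈ Dset Dmax,
    (y d * (τ * (1 + (d : ℝ) * expo Dmax m pP pU βIA K y) * LP + cP)
      + (m d - y d) * (τ * (1 + (d : ℝ) * expo Dmax m pP pU βIA K y) * LU))

/-- Admissible social planner action: `y_d ∈ [0, m_d]` for each `d ∈ 𝒟`. -/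
def isPlan (Dmax : ℕ) (m : ℕ → ℝ) (y : ℕ → ℝ) : Prop :=
  ∀ d ∈ Dset Dmax, 0 ≤ y d ∧ y d ≤ m d

/-- degree threshold at the social optimum. If `y*` minimizes the
social cost and `d†` is the smallest degree with `y*_{d†} > 0`, with `d† < D_max`,
then `y*_d = m_d` for all `d > d†`. -/
lemma sum_sub_pair {s : Finset ℕ} {a b : ℕ} (ha : a ∈ s) (hb : b ∈ s) (hab : a ≠ b)
    (f g : ℕ → ℝ) (h : ∀ x ∈ s, x ≠ a → x ≠ b → f x = g x) :
    ∑ x ∈ s, f x - ∑ x ∈ s, g x = (f a - g a) + (f b - g b) := by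
  have hsub : ({a, b} : Finset ℕ) ⊆ s := by
    intro x hx
    rcases Finset.mem_insert.mp hx with rfl | hx
    · exact ha
    · rcases Finset.mem_singleton.mp hx with rfl
      exact hb
  have h0 : ∀ x ∈ s, x ∉ ({a, b} : Finset ℕ) → f x - g x = 0 := by
    intro x hx hx'
    simp only [Finset.mem_insert, Finset.mem_singleton, not_or] at hx'
    rw [h x hx hx'.1 hx'.2]; ring
  rw [← Finset.sum_sub_distrib, ← Finset.sum_subset hsub h0, Finset.sum_pair hab]

set_option maxHeartbeats 1000000 in
theorem social_opt_degree_threshold (Dmax : ℕ) (hD : 1 ≤ Dmax)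
    (m : ℕ → ℝ) (hm : ∀ d ∈ Dset Dmax, 0 < m d)
    (pP pU βIA τ LP LU cP : ℝ) (K : ℕ)
    (hpP : 0 ≤ pP) (hp : pP < pU) (hpU : pU ≤ 1)
    (hβ0 : 0 < βIA) (hβ1 : βIA ≤ 1) (hK : 1 ≤ K)
    (hτ0 : 0 < τ) (hτ1 : τ ≤ 1) (hLP : 0 < LP) (hL : LP < LU) (hcP : 0 < cP)
    (ystar : ℕ → ℝ) (hplan : isPlan Dmax m ystar)
    (hmin : ∀ y : ℕ → ℝ, isPlan Dmax m y →
      SC Dmax m pP pU βIA τ LP LU cP K ystar ≤ SC Dmax m pP pU βIA τ LP LU cP K y)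
    (ddag : ℕ) (hdin : ddag ∈ Dset Dmax) (hdpos : 0 < ystar ddag)
    (hdmin : ∀ d ∈ Dset Dmax, d < ddag → ystar d = 0)
    (hdlt : ddag < Dmax) :
    ∀ d ∈ Dset Dmax, ddag < d → ystar d = m d := by
  intro d hd hdd
  by_contra hne
  have hyd := hplan d hd
  have hydd := hplan ddag hdin
  have hmd := hm d hd
  have hmdd := hm ddag hdin
  have hlt : ystar d < m d := lt_of_le_of_ne hyd.2 hne
  have hΔp : 0 < pU - pP := sub_pos.mpr hp
  have hΔL : 0 < LU - LP := sub_pos.mpr hL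
  set ε := min (ystar ddag) (m d - ystar d) with hεdef
  have hε0 : 0 < ε := lt_min hdpos (by linarith)
  have hεa : ε ≤ ystar ddag := min_le_left _ _
  have hεb : ε ≤ m d - ystar d := min_le_right _ _
  have hab : ddag ≠ d := Nat.ne_of_lt hdd
  set y' : ℕ → ℝ :=
    Function.update (Function.update ystar ddag (ystar ddag - ε)) d (ystar d + ε)
    with hy'def
  have hy'a : y' ddag = ystar ddag - ε := by
    rw [hy'def, Function.update_of_ne hab, Function.update_self]
  have hy'b : y' d = ystar d + ε := by rw [hy'def, Function.update_self]
  have hy'o : ∀ x, x ≠ ddag → x ≠ d → y' x = ystar x := by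
    intro x h1 h2
    rw [hy'def, Function.update_of_ne h2, Function.update_of_ne h1]
  have hplan' : isPlan Dmax m y' := by
    intro x hx
    by_cases h1 : x = d
    · subst h1
      rw [hy'b]
      constructor <;> [linarith [hyd.1]; linarith]
    · by_cases h2 : x = ddag
      · subst h2
        rw [hy'a]
        constructor <;> [linarith; linarith [hydd.2]]
      · rw [hy'o x h2 h1]
        exact hplan x hx
  -- basic positivity facts
  have hone : ∀ i ∈ Dset Dmax, (1:ℝ) ≤ (i:ℝ) := by
    intro i hi
    have := (Finset.mem_Icc.mp hi).1
    exact_mod_cast this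
  have hS : 0 < ∑ d' ∈ Dset Dmax, (d' : ℝ) * m d' := by
    apply Finset.sum_pos
    · intro i hi
      exact mul_pos (lt_of_lt_of_le one_pos (hone i hi)) (hm i hi)
    · exact ⟨1, Finset.mem_Icc.mpr ⟨le_refl 1, hD⟩⟩
  have hSne : (∑ d' ∈ Dset Dmax, (d' : ℝ) * m d') ≠ 0 := ne_of_gt hS
  have hw : ∀ i ∈ Dset Dmax, 0 ≤ wgt Dmax m i := by
    intro i hi
    exact div_nonneg (mul_nonneg (Nat.cast_nonneg i) (hm i hi).le) hS.le
  have hwdd : 0 < wgt Dmax m ddag := by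
    unfold wgt
    exact div_pos (mul_pos (lt_of_lt_of_le one_pos (hone ddag hdin)) hmdd) hS
  have hbound : ∀ (y : ℕ → ℝ), isPlan Dmax m y → ∀ i ∈ Dset Dmax,
      pP ≤ pU - y i / m i * (pU - pP) := by
    intro y hy i hi
    obtain ⟨h0, h1⟩ := hy i hi
    have hmi := hm i hi
    have hs1 : y i / m i ≤ 1 := (div_le_one hmi).mpr h1
    nlinarith
  have hlambnn : ∀ y, isPlan Dmax m y → 0 ≤ lamb Dmax m pP pU βIA y := by
    intro y hy
    apply mul_nonneg hβ0.le
    apply Finset.sum_nonneg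
    intro i hi
    exact mul_nonneg (mul_nonneg (hw i hi) (by linarith [hone i hi]))
      (le_trans hpP (hbound y hy i hi))
  have hgamnn : ∀ y, isPlan Dmax m y → 0 ≤ gam Dmax m pP pU βIA y := by
    intro y hy
    apply mul_nonneg hβ0.le
    apply Finset.sum_nonneg
    intro i hi
    exact mul_nonneg (hw i hi) (le_trans hpP (hbound y hy i hi))
  have hgampos : 0 < gam Dmax m pP pU βIA y' := by
    apply mul_pos hβ0
    apply Finset.sum_pos'
    · intro i hi
      exact mul_nonneg (hw i hi) (le_trans hpP (hbound y' hplan' i hi))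
    · refine ⟨ddag, hdin, mul_pos hwdd ?_⟩
      have hs : y' ddag / m ddag < 1 := by
        rw [hy'a, div_lt_one hmdd]
        linarith [hydd.2]
      have := mul_lt_mul_of_pos_right hs hΔp
      linarith
  have hcast : (ddag : ℝ) < (d : ℝ) := Nat.cast_lt.mpr hdd
  have h1d : (1:ℝ) ≤ (ddag : ℝ) := hone ddag hdin
  -- gamma decreases
  have hgamle : gam Dmax m pP pU βIA y' ≤ gam Dmax m pP pU βIA ystar := by
    have hdiff := sum_sub_pair hdin hd hab
      (fun i => wgt Dmax m i * (pU - y' i / m i * (pU - pP)))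
      (fun i => wgt Dmax m i * (pU - ystar i / m i * (pU - pP)))
      (fun x hx h1 h2 => by simp only [hy'o x h1 h2])
    simp only [hy'a, hy'b] at hdiff
    have hval : wgt Dmax m ddag * (pU - (ystar ddag - ε) / m ddag * (pU - pP)) -
        wgt Dmax m ddag * (pU - ystar ddag / m ddag * (pU - pP)) +
        (wgt Dmax m d * (pU - (ystar d + ε) / m d * (pU - pP)) -
          wgt Dmax m d * (pU - ystar d / m d * (pU - pP)))
        = ((ddag:ℝ) - d) * ε * (pU - pP) / (∑ d' ∈ Dset Dmax, (d' : ℝ) * m d') := by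
      unfold wgt
      field_simp
      ring
    rw [hval] at hdiff
    have hneg : ((ddag:ℝ) - d) * ε * (pU - pP) / (∑ d' ∈ Dset Dmax, (d' : ℝ) * m d') ≤ 0 := by
      apply div_nonpos_of_nonpos_of_nonneg _ hS.le
      apply mul_nonpos_of_nonpos_of_nonneg _ hΔp.le
      apply mul_nonpos_of_nonpos_of_nonneg _ hε0.le
      linarith only [hcast]
    unfold gam
    have hss : (∑ i ∈ Dset Dmax, wgt Dmax m i * (pU - y' i / m i * (pU - pP)))
        ≤ ∑ i ∈ Dset Dmax, wgt Dmax m i * (pU - ystar i / m i * (pU - pP)) := by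
      linarith only [hdiff, hneg]
    exact mul_le_mul_of_nonneg_left hss hβ0.le
  -- lambda decreases
  have hlamble : lamb Dmax m pP pU βIA y' ≤ lamb Dmax m pP pU βIA ystar := by
    have hdiff := sum_sub_pair hdin hd hab
      (fun i => wgt Dmax m i * ((i:ℝ) - 1) * (pU - y' i / m i * (pU - pP)))
      (fun i => wgt Dmax m i * ((i:ℝ) - 1) * (pU - ystar i / m i * (pU - pP)))
      (fun x hx h1 h2 => by simp only [hy'o x h1 h2])
    simp only [hy'a, hy'b] at hdiff
    have hval : wgt Dmax m ddag * ((ddag:ℝ) - 1) * (pU - (ystar ddag - ε) / m ddag * (pU - pP)) -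
        wgt Dmax m ddag * ((ddag:ℝ) - 1) * (pU - ystar ddag / m ddag * (pU - pP)) +
        (wgt Dmax m d * ((d:ℝ) - 1) * (pU - (ystar d + ε) / m d * (pU - pP)) -
          wgt Dmax m d * ((d:ℝ) - 1) * (pU - ystar d / m d * (pU - pP)))
        = ((ddag:ℝ) * ((ddag:ℝ) - 1) - (d:ℝ) * ((d:ℝ) - 1)) * ε * (pU - pP) /
            (∑ d' ∈ Dset Dmax, (d' : ℝ) * m d') := by
      unfold wgt
      field_simp
      ring
    rw [hval] at hdiff
    have hneg : ((ddag:ℝ) * ((ddag:ℝ) - 1) - (d:ℝ) * ((d:ℝ) - 1)) * ε * (pU - pP) /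
        (∑ d' ∈ Dset Dmax, (d' : ℝ) * m d') ≤ 0 := by
      apply div_nonpos_of_nonpos_of_nonneg _ hS.le
      apply mul_nonpos_of_nonpos_of_nonneg _ hΔp.le
      apply mul_nonpos_of_nonpos_of_nonneg _ hε0.le
      nlinarith [hcast, h1d]
    unfold lamb
    have hss : (∑ i ∈ Dset Dmax, wgt Dmax m i * ((i:ℝ) - 1) * (pU - y' i / m i * (pU - pP)))
        ≤ ∑ i ∈ Dset Dmax, wgt Dmax m i * ((i:ℝ) - 1) * (pU - ystar i / m i * (pU - pP)) := by
      linarith only [hdiff, hneg]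
    exact mul_le_mul_of_nonneg_left hss hβ0.le
  -- exposure comparison
  have hl' := hlambnn y' hplan'
  have hsumle : ∑ k ∈ Finset.range K, lamb Dmax m pP pU βIA y' ^ k ≤
      ∑ k ∈ Finset.range K, lamb Dmax m pP pU βIA ystar ^ k :=
    Finset.sum_le_sum (fun k _ => pow_le_pow_left₀ hl' hlamble k)
  have hsumnn : 0 ≤ ∑ k ∈ Finset.range K, lamb Dmax m pP pU βIA y' ^ k :=
    Finset.sum_nonneg (fun k _ => pow_nonneg hl' k)
  have hsumpos : 0 < ∑ k ∈ Finset.range K, lamb Dmax m pP pU βIA y' ^ k := by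
    apply Finset.sum_pos' (fun k _ => pow_nonneg hl' k)
    exact ⟨0, Finset.mem_range.mpr (by omega), by norm_num⟩
  have hAle : expo Dmax m pP pU βIA K y' ≤ expo Dmax m pP pU βIA K ystar := by
    unfold expo
    exact mul_le_mul hgamle hsumle hsumnn (hgamnn ystar hplan)
  have hApos : 0 < expo Dmax m pP pU βIA K y' := mul_pos hgampos hsumpos
  -- social cost comparison
  have h1 := sum_sub_pair hdin hd hab
    (fun i => y' i * (τ * (1 + (i : ℝ) * expo Dmax m pP pU βIA K y') * LP + cP)
      + (m i - y' i) * (τ * (1 + (i : ℝ) * expo Dmax m pP pU βIA K y') * LU))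
    (fun i => ystar i * (τ * (1 + (i : ℝ) * expo Dmax m pP pU βIA K y') * LP + cP)
      + (m i - ystar i) * (τ * (1 + (i : ℝ) * expo Dmax m pP pU βIA K y') * LU))
    (fun x hx hx1 hx2 => by simp only [hy'o x hx1 hx2])
  simp only [hy'a, hy'b] at h1
  have h1' : SC Dmax m pP pU βIA τ LP LU cP K y'
      - ∑ i ∈ Dset Dmax,
          (ystar i * (τ * (1 + (i : ℝ) * expo Dmax m pP pU βIA K y') * LP + cP)
            + (m i - ystar i) * (τ * (1 + (i : ℝ) * expo Dmax m pP pU βIA K y') * LU))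
      = ε * τ * (LU - LP) * expo Dmax m pP pU βIA K y' * ((ddag:ℝ) - (d:ℝ)) := by
    unfold SC
    rw [h1]
    ring
  have hstep2 : ∑ i ∈ Dset Dmax,
      (ystar i * (τ * (1 + (i : ℝ) * expo Dmax m pP pU βIA K y') * LP + cP)
        + (m i - ystar i) * (τ * (1 + (i : ℝ) * expo Dmax m pP pU βIA K y') * LU))
      ≤ SC Dmax m pP pU βIA τ LP LU cP K ystar := by
    unfold SC
    apply Finset.sum_le_sum
    intro i hi
    have hy := hplan i hi
    have hi0 : (0:ℝ) ≤ (i:ℝ) := Nat.cast_nonneg i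
    have hkey : 0 ≤ τ * (i:ℝ) *
        (expo Dmax m pP pU βIA K ystar - expo Dmax m pP pU βIA K y') *
        (ystar i * LP + (m i - ystar i) * LU) := by
      apply mul_nonneg (mul_nonneg (mul_nonneg hτ0.le hi0) (by linarith))
      have h1 : 0 ≤ ystar i * LP := mul_nonneg hy.1 hLP.le
      have h2 : 0 ≤ (m i - ystar i) * LU := mul_nonneg (by linarith [hy.2]) (by linarith)
      linarith
    linarith only [hkey]
  have hneg : ε * τ * (LU - LP) * expo Dmax m pP pU βIA K y' * ((ddag:ℝ) - (d:ℝ)) < 0 := by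
    apply mul_neg_of_pos_of_neg
    · exact mul_pos (mul_pos (mul_pos hε0 hτ0) hΔL) hApos
    · linarith
  have hmin' := hmin y' hplan'
  linarith only [hmin', h1', hstep2, hneg]
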